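/- Let a ∈ ℂ with Im a > 0 and Re a ≤ 0, and let b > 0. Then Re ∫_{1}^{bi} √(p_a(z)) dz ≠ 0, where the integral is taken along the path [1,0] ∪ [0, bi] with arguments chosen in [0, 2π) and square roots with argument in [0, π). Concretely, Re ∫₀¹ √((1-t²)(a-t)) dt > 0 and Im ∫₀¹ √((1+b²t²)(a - ibt)) dt > 0, so their combination -Re∫₀¹√((1-t²)(a-t))dt - b·Im∫₀¹√((1+b²t²)(a-ibt))dt is strictly negative. -/

import Mathlib

open Complex Set intervalIntegral

noncomputable section

/-- The argument of `z` chosen in `[0, 2π)`. -/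
def arg2 (z : ℂ) : ℝ := if 0 ≤ z.arg then z.arg else z.arg + 2 * Real.pi

/-- The branch of the square root with `arg √z ∈ [0, π)`. -/
def sqrtA (z : ℂ) : ℂ :=
  (Real.sqrt ‖z‖ : ℂ) * Complex.exp (Complex.I * arg2 z / 2)

lemma sqrtA_arg (z : ℂ) : Complex.I * (arg2 z : ℂ) / 2 = ((arg2 z / 2 : ℝ) : ℂ) * Complex.I := by
  push_cast; ring

lemma sqrtA_re (z : ℂ) :
    (sqrtA z).re = Real.sqrt ‖z‖ * Real.cos (arg2 z / 2) := by
  rw [sqrtA, sqrtA_arg, Complex.re_ofReal_mul, Complex.exp_ofReal_mul_I_re]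

lemma sqrtA_im (z : ℂ) :
    (sqrtA z).im = Real.sqrt ‖z‖ * Real.sin (arg2 z / 2) := by
  rw [sqrtA, sqrtA_arg, Complex.im_ofReal_mul, Complex.exp_ofReal_mul_I_im]

lemma norm_sqrtA (z : ℂ) : ‖sqrtA z‖ = Real.sqrt ‖z‖ := by
  rw [sqrtA, sqrtA_arg, norm_mul, Complex.norm_exp_ofReal_mul_I]
  simp [Real.sqrt_nonneg]

lemma arg2_nonneg (z : ℂ) : 0 ≤ arg2 z := by
  unfold arg2; split
  · assumption
  · nlinarith [Complex.neg_pi_lt_arg z, Real.pi_pos]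

lemma arg2_lt_two_pi (z : ℂ) : arg2 z < 2 * Real.pi := by
  unfold arg2; split
  · nlinarith [Complex.arg_le_pi z, Real.pi_pos]
  · nlinarith [Complex.arg_le_pi z]

lemma sqrtA_im_nonneg (z : ℂ) : 0 ≤ (sqrtA z).im := by
  rw [sqrtA_im]
  have h1 := arg2_nonneg z
  have h2 := arg2_lt_two_pi z
  exact mul_nonneg (Real.sqrt_nonneg _)
    (Real.sin_nonneg_of_nonneg_of_le_pi (by linarith) (by linarith))

lemma arg2_mem (z : ℂ) (hz : z ≠ 0) (hre : z.re ≤ 0) :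
    Real.pi / 2 ≤ arg2 z ∧ arg2 z ≤ 3 * Real.pi / 2 := by
  have hpi := Real.pi_pos
  have habs : Real.pi / 2 ≤ |z.arg| := by
    rcases lt_or_eq_of_le hre with h | h
    · by_contra hc
      push_neg at hc
      have := Complex.abs_arg_le_pi_div_two_iff.mp hc.le
      linarith
    · -- re z = 0, im ≠ 0
      have him : z.im ≠ 0 := by
        intro h0; exact hz (Complex.ext (by simp [← h]) (by simp [h0]))
      rcases him.lt_or_gt with h' | h'
      · rw [Complex.arg_eq_neg_pi_div_two_iff.mpr ⟨by linarith, h'⟩]; rw [abs_neg, abs_of_pos (by linarith)]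
      · rw [Complex.arg_eq_pi_div_two_iff.mpr ⟨by linarith, h'⟩, abs_of_pos (by linarith)]
  have h1 := Complex.arg_le_pi z
  have h2 := Complex.neg_pi_lt_arg z
  unfold arg2; split
  · rename_i h
    rw [_root_.abs_of_nonneg h] at habs
    constructor <;> linarith
  · rename_i h
    push_neg at h
    rw [abs_of_neg h] at habs
    constructor <;> linarith

lemma sqrtA_im_pos (z : ℂ) (hz : z ≠ 0) (hre : z.re ≤ 0) : 0 < (sqrtA z).im := by
  rw [sqrtA_im]
  obtain ⟨h1, h2⟩ := arg2_mem z hz hre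
  have hpi := Real.pi_pos
  exact mul_pos (Real.sqrt_pos.mpr (norm_pos_iff.mpr hz))
    (Real.sin_pos_of_pos_of_lt_pi (by linarith) (by linarith))

lemma sqrtA_re_pos (z : ℂ) (hre : z.re ≤ 0) (him : 0 < z.im) : 0 < (sqrtA z).re := by
  rw [sqrtA_re]
  have hz : z ≠ 0 := by intro h; rw [h] at him; simp at him
  have hpi := Real.pi_pos
  have harg_lt : z.arg < Real.pi := by
    rcases lt_or_eq_of_le (Complex.arg_le_pi z) with h | h
    · exact h
    · exfalso
      have := Complex.arg_eq_pi_iff.mp h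
      linarith [this.2]
  have harg_nonneg : 0 ≤ z.arg := Complex.arg_nonneg_iff.mpr him.le
  have h2 : arg2 z = z.arg := if_pos harg_nonneg
  obtain ⟨h1, _⟩ := arg2_mem z hz hre
  rw [h2] at h1 ⊢
  exact mul_pos (Real.sqrt_pos.mpr (norm_pos_iff.mpr hz))
    (Real.cos_pos_of_mem_Ioo ⟨by linarith, by linarith⟩)

lemma measurable_sqrtA : Measurable sqrtA := by
  apply Measurable.mul
  · exact Complex.measurable_ofReal.comp
      (Real.continuous_sqrt.measurable.comp continuous_norm.measurable)
  · apply Complex.continuous_exp.measurable.comp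
    apply Measurable.div_const
    apply (measurable_const.mul _)
    apply Complex.measurable_ofReal.comp
    unfold arg2
    exact Measurable.ite (measurableSet_le measurable_const Complex.measurable_arg)
      Complex.measurable_arg (Complex.measurable_arg.add_const _)

open MeasureTheory in
lemma sqrtA_intervalIntegrable {γ : ℝ → ℂ} (hγ : Continuous γ) {M : ℝ}
    (hM : ∀ t ∈ Icc (0:ℝ) 1, ‖γ t‖ ≤ M) :
    IntervalIntegrable (fun t => sqrtA (γ t)) volume 0 1 := by
  rw [intervalIntegrable_iff_integrableOn_Ioc_of_le zero_le_one]
  apply Measure.integrableOn_of_bounded (M := Real.sqrt M)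
  · simp
  · exact (measurable_sqrtA.comp hγ.measurable).aestronglyMeasurable
  · rw [ae_restrict_iff' measurableSet_Ioc]
    filter_upwards with t ht
    rw [norm_sqrtA]
    exact Real.sqrt_le_sqrt (hM t ⟨ht.1.le, ht.2⟩)

open MeasureTheory in
lemma IntervalIntegrable.re' {f : ℝ → ℂ} {a b : ℝ}
    (hf : IntervalIntegrable f volume a b) :
    IntervalIntegrable (fun t => (f t).re) volume a b :=
  ⟨by simpa [IntegrableOn] using hf.1.re, by simpa [IntegrableOn] using hf.2.re⟩

open MeasureTheory in
lemma IntervalIntegrable.im' {f : ℝ → ℂ} {a b : ℝ}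
    (hf : IntervalIntegrable f volume a b) :
    IntervalIntegrable (fun t => (f t).im) volume a b :=
  ⟨by simpa [IntegrableOn] using hf.1.im, by simpa [IntegrableOn] using hf.2.im⟩

theorem stmt14 (a : ℂ) (ha1 : 0 < a.im) (ha2 : a.re ≤ 0) (b : ℝ) (hb : 0 < b) :
    0 < (∫ t in (0:ℝ)..1, sqrtA ((1 - (t:ℂ) ^ 2) * (a - t))).re ∧
    0 < (∫ t in (0:ℝ)..1,
        sqrtA ((1 + (b:ℂ) ^ 2 * (t:ℂ) ^ 2) * (a - Complex.I * b * t))).im ∧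
    -- hence `Re ∫_1^{bi} √(p_a) dz` (over the path `[1,0] ∪ [0,bi]`) is negative, nonzero
    (-(∫ t in (0:ℝ)..1, sqrtA ((1 - (t:ℂ) ^ 2) * (a - t))).re -
        b * (∫ t in (0:ℝ)..1,
          sqrtA ((1 + (b:ℂ) ^ 2 * (t:ℂ) ^ 2) * (a - Complex.I * b * t))).im < 0) ∧
    (-(∫ t in (0:ℝ)..1, sqrtA ((1 - (t:ℂ) ^ 2) * (a - t))).re -
        b * (∫ t in (0:ℝ)..1,
          sqrtA ((1 + (b:ℂ) ^ 2 * (t:ℂ) ^ 2) * (a - Complex.I * b * t))).im ≠ 0) := by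
  set γ1 : ℝ → ℂ := fun t => (1 - (t:ℂ) ^ 2) * (a - t) with hγ1
  set γ2 : ℝ → ℂ := fun t => (1 + (b:ℂ) ^ 2 * (t:ℂ) ^ 2) * (a - Complex.I * b * t) with hγ2
  have hcont1 : Continuous γ1 := by fun_prop
  have hcont2 : Continuous γ2 := by fun_prop
  have hM1 : ∀ t ∈ Icc (0:ℝ) 1, ‖γ1 t‖ ≤ 2 * (‖a‖ + 1) := by
    intro t ht
    rw [hγ1]
    simp only [norm_mul]
    have h1 : ‖1 - (t:ℂ)^2‖ ≤ 2 := by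
      calc ‖1 - (t:ℂ)^2‖ ≤ ‖(1:ℂ)‖ + ‖(t:ℂ)^2‖ :=
            norm_sub_le _ _
        _ ≤ 2 := by
            rw [norm_one, norm_pow, Complex.norm_real, Real.norm_eq_abs, _root_.abs_of_nonneg ht.1]
            nlinarith [ht.1, ht.2]
    have h2 : ‖a - (t:ℂ)‖ ≤ ‖a‖ + 1 := by
      calc ‖a - (t:ℂ)‖ ≤ ‖a‖ + ‖(t:ℂ)‖ :=
            norm_sub_le _ _
        _ ≤ ‖a‖ + 1 := by
            rw [Complex.norm_real, Real.norm_eq_abs, _root_.abs_of_nonneg ht.1]; linarith [ht.2]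
    have := norm_nonneg (a - (t:ℂ))
    nlinarith [norm_nonneg (1 - (t:ℂ)^2)]
  have hM2 : ∀ t ∈ Icc (0:ℝ) 1, ‖γ2 t‖ ≤ (1 + b^2) * (‖a‖ + b) := by
    intro t ht
    rw [hγ2]
    simp only [norm_mul]
    have h1 : ‖1 + (b:ℂ)^2 * (t:ℂ)^2‖ ≤ 1 + b^2 := by
      calc ‖1 + (b:ℂ)^2 * (t:ℂ)^2‖
          ≤ ‖(1:ℂ)‖ + ‖(b:ℂ)^2 * (t:ℂ)^2‖ := norm_add_le _ _
        _ ≤ 1 + b^2 := by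
            rw [norm_one, norm_mul, norm_pow, norm_pow, Complex.norm_real, Complex.norm_real,
              Real.norm_eq_abs, Real.norm_eq_abs,
              _root_.abs_of_nonneg ht.1, _root_.abs_of_pos hb]
            have h : t^2 ≤ 1 := by nlinarith [ht.1, ht.2]
            nlinarith [sq_nonneg b]
    have h2 : ‖a - Complex.I * b * t‖ ≤ ‖a‖ + b := by
      calc ‖a - Complex.I * b * t‖
          ≤ ‖a‖ + ‖Complex.I * b * t‖ := norm_sub_le _ _
        _ ≤ ‖a‖ + b := by
            rw [norm_mul, norm_mul, Complex.norm_I, Complex.norm_real, Complex.norm_real,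
              Real.norm_eq_abs, Real.norm_eq_abs,
              _root_.abs_of_pos hb, _root_.abs_of_nonneg ht.1, one_mul]
            nlinarith [ht.2]
    nlinarith [norm_nonneg (1 + (b:ℂ)^2 * (t:ℂ)^2), norm_nonneg (a - Complex.I * b * t),
      norm_nonneg a, sq_nonneg b]
  have hi1 : IntervalIntegrable (fun t => sqrtA (γ1 t)) MeasureTheory.volume 0 1 :=
    sqrtA_intervalIntegrable hcont1 hM1
  have hi2 : IntervalIntegrable (fun t => sqrtA (γ2 t)) MeasureTheory.volume 0 1 :=
    sqrtA_intervalIntegrable hcont2 hM2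
  -- rewrite re/im of integrals
  have e1 : (∫ t in (0:ℝ)..1, sqrtA (γ1 t)).re = ∫ t in (0:ℝ)..1, (sqrtA (γ1 t)).re := by
    have := Complex.reCLM.intervalIntegral_comp_comm hi1
    simpa using this.symm
  have e2 : (∫ t in (0:ℝ)..1, sqrtA (γ2 t)).im = ∫ t in (0:ℝ)..1, (sqrtA (γ2 t)).im := by
    have := Complex.imCLM.intervalIntegral_comp_comm hi2
    simpa using this.symm
  -- first integral positive
  have key1 : 0 < (∫ t in (0:ℝ)..1, sqrtA (γ1 t)).re := by
    rw [e1]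
    apply intervalIntegral_pos_of_pos_on hi1.re' _ one_pos
    intro t ht
    apply sqrtA_re_pos
    · rw [hγ1]
      have h1 : (0:ℝ) < 1 - t^2 := by nlinarith [ht.1, ht.2]
      have hre : ((1 - (t:ℂ)^2) * (a - t)).re = (1 - t^2) * (a.re - t) := by
        simp [Complex.mul_re, Complex.mul_im, Complex.sub_re, Complex.sub_im, ← Complex.ofReal_pow]
      rw [hre]
      nlinarith [ht.1]
    · rw [hγ1]
      have him : ((1 - (t:ℂ)^2) * (a - t)).im = (1 - t^2) * a.im := by
        simp [Complex.mul_re, Complex.mul_im, Complex.sub_re, Complex.sub_im, ← Complex.ofReal_pow]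
      rw [him]
      exact mul_pos (by nlinarith [ht.1, ht.2]) ha1
  -- second integral positive
  have key2 : 0 < (∫ t in (0:ℝ)..1, sqrtA (γ2 t)).im := by
    rw [e2]
    set c : ℝ := min (a.im / b) 1 with hc
    have hc0 : 0 < c := lt_min (div_pos ha1 hb) one_pos
    have hc1 : c ≤ 1 := min_le_right _ _
    have hsub1 : IntervalIntegrable (fun t => (sqrtA (γ2 t)).im) MeasureTheory.volume 0 c :=
      (hi2.mono_set (by rw [uIcc_of_le hc0.le, uIcc_of_le zero_le_one]; exact Icc_subset_Icc le_rfl hc1)).im'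
    have hsub2 : IntervalIntegrable (fun t => (sqrtA (γ2 t)).im) MeasureTheory.volume c 1 :=
      (hi2.mono_set (by rw [uIcc_of_le hc1, uIcc_of_le zero_le_one]; exact Icc_subset_Icc hc0.le le_rfl)).im'
    rw [← intervalIntegral.integral_add_adjacent_intervals hsub1 hsub2]
    have hpos : 0 < ∫ t in (0:ℝ)..c, (sqrtA (γ2 t)).im := by
      apply intervalIntegral_pos_of_pos_on hsub1 _ hc0
      intro t ht
      have htlt : t < a.im / b := lt_of_lt_of_le ht.2 (min_le_left _ _)
      have him : (γ2 t).im = (1 + b^2 * t^2) * (a.im - b * t) := by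
        rw [hγ2]
        simp [Complex.mul_re, Complex.mul_im, Complex.sub_re, Complex.sub_im, ← Complex.ofReal_pow]
      have himpos : 0 < (γ2 t).im := by
        rw [him]
        have : 0 < a.im - b * t := by
          rw [sub_pos]
          calc b * t < b * (a.im / b) := by exact mul_lt_mul_of_pos_left htlt hb
            _ = a.im := by field_simp
        nlinarith [sq_nonneg (b * t), ht.1]
      apply sqrtA_im_pos
      · intro h0; rw [h0] at himpos; simp at himpos
      · rw [hγ2]
        have hre : ((1 + (b:ℂ)^2 * (t:ℂ)^2) * (a - Complex.I * b * t)).re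
            = (1 + b^2 * t^2) * a.re := by
          simp [Complex.mul_re, Complex.mul_im, Complex.sub_re, Complex.sub_im, ← Complex.ofReal_pow]
        rw [hre]
        nlinarith [sq_nonneg (b * t)]
    have hnn : 0 ≤ ∫ t in c..(1:ℝ), (sqrtA (γ2 t)).im :=
      intervalIntegral.integral_nonneg hc1 (fun u _ => sqrtA_im_nonneg _)
    linarith
  refine ⟨key1, key2, ?_, ?_⟩
  · nlinarith
  · nlinarith
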